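/- Let p, q : ℕ. On ℂ^p × ℂ^q define the hermitian form h((x,y),(x',y')) = ∑_i conj(x i) * x' i − ∑_j conj(y j) * y' j. Let W be a ℂ-subspace of ℂ^p × ℂ^q such that h(v,v) < 0 for every nonzero v ∈ W. Then finrank W ≤ q; moreover, if finrank W = q, then there exists a unique Z ∈ Matrix (Fin p) (Fin q) ℂ with W = {(Z *ᵥ w, w) | w ∈ (Fin q → ℂ)}, and for this Z the matrix 1 − Zᴴ * Z is positive definite. -/

import Mathlib

open Matrix FiniteDimensional
open scoped ComplexOrder

/-- A subspace `W ⊆ ℂ^p × ℂ^q` that is negative definite for the hermitian form of signature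
`(p,q)` has dimension at most `q`; if its dimension equals `q` it is the graph of a unique
matrix `Z` with `1 − Zᴴ Z` positive definite. -/
theorem stmt_5 (p q : ℕ)
    (h : ((Fin p → ℂ) × (Fin q → ℂ)) → ((Fin p → ℂ) × (Fin q → ℂ)) → ℂ)
    (hh : ∀ v v', h v v' =
      (∑ i, starRingEnd ℂ (v.1 i) * v'.1 i) - ∑ j, starRingEnd ℂ (v.2 j) * v'.2 j)
    (W : Submodule ℂ ((Fin p → ℂ) × (Fin q → ℂ)))
    (hW : ∀ v ∈ W, v ≠ 0 → h v v < 0) :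
    Module.finrank ℂ W ≤ q ∧
    (Module.finrank ℂ W = q →
      ∃! Z : Matrix (Fin p) (Fin q) ℂ,
        (W : Set ((Fin p → ℂ) × (Fin q → ℂ))) = {v | ∃ w, v = (Z *ᵥ w, w)} ∧
        (1 - Z.conjTranspose * Z).PosDef) := by
  -- the projection to the second factor, restricted to W
  set f : W →ₗ[ℂ] (Fin q → ℂ) :=
    (LinearMap.snd ℂ (Fin p → ℂ) (Fin q → ℂ)).comp W.subtype with hf
  have hfinj : Function.Injective f := by
    rw [← LinearMap.ker_eq_bot, LinearMap.ker_eq_bot']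
    intro m hm
    by_contra hm0
    have hv : (m : (Fin p → ℂ) × (Fin q → ℂ)) ≠ 0 := fun hz => hm0 (Subtype.ext hz)
    have hlt := hW m m.2 hv
    have hm2 : (m : (Fin p → ℂ) × (Fin q → ℂ)).2 = 0 := hm
    rw [hh, hm2] at hlt
    simp only [Pi.zero_apply, map_zero, zero_mul, Finset.sum_const_zero, sub_zero] at hlt
    have : (0:ℂ) ≤ ∑ i, starRingEnd ℂ ((m : (Fin p → ℂ) × (Fin q → ℂ)).1 i) *
        (m : (Fin p → ℂ) × (Fin q → ℂ)).1 i :=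
      Finset.sum_nonneg fun i _ => star_mul_self_nonneg _
    exact absurd hlt this.not_gt
  have hle : Module.finrank ℂ W ≤ q := by
    have := LinearMap.finrank_le_finrank_of_injective hfinj
    simpa using this
  refine ⟨hle, fun hrank => ?_⟩
  have hfsurj : Function.Surjective f := by
    rw [← LinearMap.injective_iff_surjective_of_finrank_eq_finrank (by simpa using hrank)]
    exact hfinj
  set e : W ≃ₗ[ℂ] (Fin q → ℂ) := LinearEquiv.ofBijective f ⟨hfinj, hfsurj⟩ with he
  set g : (Fin q → ℂ) →ₗ[ℂ] (Fin p → ℂ) :=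
    (LinearMap.fst ℂ (Fin p → ℂ) (Fin q → ℂ)).comp (W.subtype.comp e.symm.toLinearMap) with hg
  set Z : Matrix (Fin p) (Fin q) ℂ := LinearMap.toMatrix' g with hZ
  have hZg : ∀ w, Z *ᵥ w = g w := by
    intro w
    rw [← Matrix.toLin'_apply, hZ, Matrix.toLin'_toMatrix']
  -- second component of e.symm w is w, first is g w
  have hesymm : ∀ w : Fin q → ℂ,
      ((e.symm w : (Fin p → ℂ) × (Fin q → ℂ))) = (g w, w) := by
    intro w
    have h2 : f (e.symm w) = w := e.apply_symm_apply w
    have h2' : ((e.symm w : (Fin p → ℂ) × (Fin q → ℂ))).2 = w := h2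
    have h1 : ((e.symm w : (Fin p → ℂ) × (Fin q → ℂ))).1 = g w := rfl
    exact Prod.ext h1 h2'
  have hgraph : (W : Set ((Fin p → ℂ) × (Fin q → ℂ))) = {v | ∃ w, v = (Z *ᵥ w, w)} := by
    ext v
    constructor
    · intro hv
      refine ⟨v.2, ?_⟩
      have : e.symm (f ⟨v, hv⟩) = ⟨v, hv⟩ := e.symm_apply_apply _
      have hv2 : ((e.symm (v.2) : (Fin p → ℂ) × (Fin q → ℂ))) = v := by
        rw [show (v.2 : Fin q → ℂ) = f ⟨v, hv⟩ from rfl, this]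
      rw [hesymm v.2] at hv2
      rw [hZg, ← hv2]
    · rintro ⟨w, rfl⟩
      rw [hZg, ← hesymm w]
      exact (e.symm w).2
  have hmem : ∀ w : Fin q → ℂ, ((Z *ᵥ w, w) : (Fin p → ℂ) × (Fin q → ℂ)) ∈ W := by
    intro w
    have : ((Z *ᵥ w, w) : (Fin p → ℂ) × (Fin q → ℂ)) ∈ (W : Set _) := by
      rw [hgraph]; exact ⟨w, rfl⟩
    exact this
  have hpos : (1 - Z.conjTranspose * Z).PosDef := by
    rw [Matrix.posDef_iff_dotProduct_mulVec]
    constructor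
    · unfold Matrix.IsHermitian
      rw [conjTranspose_sub, conjTranspose_mul, conjTranspose_conjTranspose,
        conjTranspose_one]
    · intro x hx
      have hvne : ((Z *ᵥ x, x) : (Fin p → ℂ) × (Fin q → ℂ)) ≠ 0 := by
        intro hc
        exact hx (congrArg Prod.snd hc)
      have hlt := hW _ (hmem x) hvne
      rw [hh] at hlt
      have key : dotProduct (star x) ((1 - Z.conjTranspose * Z) *ᵥ x) =
          (∑ j, starRingEnd ℂ (x j) * x j) -
            ∑ i, starRingEnd ℂ ((Z *ᵥ x) i) * (Z *ᵥ x) i := by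
        have key2 : dotProduct (star x) ((Z.conjTranspose * Z) *ᵥ x) =
            dotProduct (star (Z *ᵥ x)) (Z *ᵥ x) := by
          rw [← Matrix.mulVec_mulVec, Matrix.dotProduct_mulVec, ← Matrix.star_mulVec]
        rw [Matrix.sub_mulVec, dotProduct_sub, Matrix.one_mulVec, key2]
        simp [dotProduct]
      rw [key]
      simpa using neg_pos.mpr hlt
  refine ⟨Z, ⟨hgraph, hpos⟩, ?_⟩
  intro Z' ⟨hZ', _⟩
  have : ∀ w, Z' *ᵥ w = Z *ᵥ w := by
    intro w
    have : ((Z' *ᵥ w, w) : (Fin p → ℂ) × (Fin q → ℂ)) ∈ {v | ∃ w, v = (Z *ᵥ w, w)} := by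
      rw [← hgraph, hZ']; exact ⟨w, rfl⟩
    obtain ⟨w', hw'⟩ := this
    have h2 : w = w' := congrArg Prod.snd hw'
    have h1 : Z' *ᵥ w = Z *ᵥ w' := congrArg Prod.fst hw'
    rw [h1, ← h2]
  ext i j
  have := congrFun (this (Pi.single j 1)) i
  simpa [Matrix.mulVec_single] using this
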